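/- Every d×d complex matrix M that is both unitary and symmetric (M = Mᵀ) can be written as M = O D Oᵀ, where O is a d×d real orthogonal matrix (regarded as a complex matrix) and D is a diagonal unitary matrix, i.e., a diagonal complex matrix all of whose diagonal entries have modulus 1. -/

import Mathlib

open Matrix

noncomputable section

/-- **Diagonalization of symmetric unitaries by real orthogonal matrices.**
Every `d×d` complex matrix `M` that is both unitary and symmetric (`M = Mᵀ`) can be
written as `M = O D Oᵀ` with `O` real orthogonal and `D` a diagonal unitary. -/
theorem symmetric_unitary_orthogonal_diagonalization
    (d : ℕ) (M : Matrix (Fin d) (Fin d) ℂ)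
    (hM : M ∈ Matrix.unitaryGroup (Fin d) ℂ) (hsymm : M = Mᵀ) :
    ∃ (O : Matrix (Fin d) (Fin d) ℝ) (D : Matrix (Fin d) (Fin d) ℂ),
      O ∈ Matrix.orthogonalGroup (Fin d) ℝ ∧
      D.IsDiag ∧ (∀ i, ‖D i i‖ = 1) ∧
      M = O.map Complex.ofReal * D * (O.map Complex.ofReal)ᵀ := by
  classical
  set A : Matrix (Fin d) (Fin d) ℝ := M.map Complex.re with hAdef
  set B : Matrix (Fin d) (Fin d) ℝ := M.map Complex.im with hBdef
  have hMentry : ∀ i j, M i j = (A i j : ℂ) + (B i j : ℂ) * Complex.I := by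
    intro i j
    simp [hAdef, hBdef, Matrix.map_apply, Complex.re_add_im]
  have hMsymm : ∀ i j, M i j = M j i := fun i j => congrFun (congrFun hsymm i) j
  -- unitarity entrywise
  have hU : (star M) * M = 1 := hM.1
  have hsum : A * A + B * B = 1 := by
    ext i j
    have h := congrFun (congrFun hU i) j
    have h2 : ∑ k, (starRingEnd ℂ) (M i k) * M k j = (1 : Matrix (Fin d) (Fin d) ℂ) i j := by
      rw [← h]
      simp only [Matrix.mul_apply, Matrix.star_apply]
      exact Finset.sum_congr rfl fun k _ => by rw [hMsymm k i]; rfl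
    have hre := congrArg Complex.re h2
    simp only [Complex.re_sum, Complex.mul_re, Complex.conj_re, Complex.conj_im] at hre
    have h1re : ((1 : Matrix (Fin d) (Fin d) ℂ) i j).re = (1 : Matrix (Fin d) (Fin d) ℝ) i j := by
      by_cases hij : i = j <;> simp [hij, Matrix.one_apply]
    have key : ∑ k, (A i k * A k j + B i k * B k j) = (1 : Matrix (Fin d) (Fin d) ℝ) i j := by
      rw [← h1re, ← hre]
      refine Finset.sum_congr rfl fun k _ => ?_
      simp only [hAdef, hBdef, Matrix.map_apply]
      ring
    simpa [Matrix.add_apply, Matrix.mul_apply, Finset.sum_add_distrib] using key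
  have hcomm : A * B = B * A := by
    have key : A * B - B * A = 0 := by
      ext i j
      have h := congrFun (congrFun hU i) j
      have h2 : ∑ k, (starRingEnd ℂ) (M i k) * M k j = (1 : Matrix (Fin d) (Fin d) ℂ) i j := by
        rw [← h]
        simp only [Matrix.mul_apply, Matrix.star_apply]
        exact Finset.sum_congr rfl fun k _ => by rw [hMsymm k i]; rfl
      have him := congrArg Complex.im h2
      simp only [Complex.im_sum, Complex.mul_im, Complex.conj_re, Complex.conj_im] at him
      have h1im : ((1 : Matrix (Fin d) (Fin d) ℂ) i j).im = 0 := by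
        by_cases hij : i = j <;> simp [hij, Matrix.one_apply]
      have key2 : ∑ k, (A i k * B k j - B i k * A k j) = 0 := by
        rw [← h1im, ← him]
        refine Finset.sum_congr rfl fun k _ => ?_
        simp only [hAdef, hBdef, Matrix.map_apply]
        ring
      simpa [Matrix.sub_apply, Matrix.mul_apply, Finset.sum_sub_distrib] using key2
    exact sub_eq_zero.mp key
  -- pass to linear maps on Euclidean space
  set A' := Matrix.toEuclideanLin A with hA'def
  set B' := Matrix.toEuclideanLin B with hB'def
  have hmul : ∀ X Y : Matrix (Fin d) (Fin d) ℝ,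
      Matrix.toEuclideanLin (X*Y) = (Matrix.toEuclideanLin X) ∘ₗ (Matrix.toEuclideanLin Y) := by
    intro X Y
    ext v : 1
    simp [Matrix.toEuclideanLin_apply, Matrix.mulVec_mulVec]
  have hATsymm : Aᵀ = A := by
    ext i j
    simp only [Matrix.transpose_apply, hAdef, Matrix.map_apply]
    rw [hMsymm j i]
  have hBTsymm : Bᵀ = B := by
    ext i j
    simp only [Matrix.transpose_apply, hBdef, Matrix.map_apply]
    rw [hMsymm j i]
  have hA'symm : A'.IsSymmetric := by
    rw [hA'def, ← Matrix.isHermitian_iff_isSymmetric, Matrix.IsHermitian, Matrix.conjTranspose]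
    convert hATsymm using 1
    ext i j
    simp
  have hB'symm : B'.IsSymmetric := by
    rw [hB'def, ← Matrix.isHermitian_iff_isSymmetric, Matrix.IsHermitian, Matrix.conjTranspose]
    convert hBTsymm using 1
    ext i j
    simp
  have hcomm' : Commute A' B' := by
    show A' * B' = B' * A'
    rw [Module.End.mul_eq_comp, Module.End.mul_eq_comp, hA'def, hB'def, ← hmul, ← hmul, hcomm]
  set V : ℝ × ℝ → Submodule ℝ (EuclideanSpace ℝ (Fin d)) :=
    fun p => Module.End.eigenspace A' p.2 ⊓ Module.End.eigenspace B' p.1 with hVdef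
  have hInt : DirectSum.IsInternal V :=
    LinearMap.IsSymmetric.directSum_isInternal_of_commute hA'symm hB'symm hcomm'
  have hOF : OrthogonalFamily ℝ (fun p => V p) (fun p => (V p).subtypeₗᵢ) :=
    LinearMap.IsSymmetric.orthogonalFamily_eigenspace_inf_eigenspace hA'symm hB'symm
  have hindep : iSupIndep V :=
    ((DirectSum.isInternal_submodule_iff_iSupIndep_and_iSup_eq_top V).mp hInt).1
  have hfin : {p | V p ≠ ⊥}.Finite := WellFoundedGT.finite_ne_bot_of_iSupIndep hindep
  haveI : Fintype {p // V p ≠ ⊥} := hfin.fintype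
  have hInt' : DirectSum.IsInternal (fun p : {p // V p ≠ ⊥} => V p.1) :=
    DirectSum.isInternal_ne_bot_iff.mpr hInt
  have hOF' : OrthogonalFamily ℝ (fun p : {p // V p ≠ ⊥} => V p.1)
      (fun p => (V p.1).subtypeₗᵢ) := hOF.comp Subtype.coe_injective
  have hfr : Module.finrank ℝ (EuclideanSpace ℝ (Fin d)) = d := by
    simp [finrank_euclideanSpace]
  set b := hInt'.subordinateOrthonormalBasis hfr hOF' with hbdef
  set μ : Fin d → ℝ × ℝ := fun k => (hInt'.subordinateOrthonormalBasisIndex hfr k hOF' : {p // V p ≠ ⊥}).1 with hμdef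
  have hbmem : ∀ k, b k ∈ V (μ k) :=
    fun k => hInt'.subordinateOrthonormalBasis_subordinate hfr k hOF'
  have hAe : ∀ k, A' (b k) = (μ k).2 • b k := fun k =>
    Module.End.mem_eigenspace_iff.mp (hbmem k).1
  have hBe : ∀ k, B' (b k) = (μ k).1 • b k := fun k =>
    Module.End.mem_eigenspace_iff.mp (hbmem k).2
  -- the orthogonal matrix
  set O : Matrix (Fin d) (Fin d) ℝ := Matrix.of fun i k => b k i with hOdef
  have hOTO : Oᵀ * O = 1 := by
    ext k l
    have h1 := orthonormal_iff_ite.mp b.orthonormal k l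
    have h2 : ∑ i, b k i * b l i = if k = l then 1 else 0 := by
      simpa [PiLp.inner_apply, RCLike.inner_apply, conj_trivial, mul_comm] using h1
    simpa [Matrix.mul_apply, Matrix.one_apply, hOdef] using h2
  have hOOT : O * Oᵀ = 1 := mul_eq_one_comm.mp hOTO
  have hOmem : O ∈ Matrix.orthogonalGroup (Fin d) ℝ := by
    rw [Matrix.mem_orthogonalGroup_iff]
    simpa using hOOT
  -- eigenvalue moduli
  have hnorm : ∀ k, (μ k).2 ^ 2 + (μ k).1 ^ 2 = 1 := by
    intro k
    have h1 : Matrix.toEuclideanLin (A * A + B * B) (b k) = b k := by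
      rw [hsum]
      have hone : Matrix.toEuclideanLin (1 : Matrix (Fin d) (Fin d) ℝ) = LinearMap.id := by
        ext v : 1
        simp [Matrix.toEuclideanLin_apply]
      rw [hone]; rfl
    have h2 : Matrix.toEuclideanLin (A * A + B * B) (b k)
        = ((μ k).2 ^ 2 + (μ k).1 ^ 2) • b k := by
      rw [map_add, hmul, hmul]
      simp only [LinearMap.add_apply, LinearMap.comp_apply, ← hA'def, ← hB'def]
      rw [hAe, _root_.map_smul, hAe, hBe, _root_.map_smul, hBe, smul_smul, smul_smul, ← add_smul]
      ring_nf
    have h3 : (((μ k).2 ^ 2 + (μ k).1 ^ 2) - 1) • b k = 0 := by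
      rw [sub_smul, one_smul, ← h2, h1, sub_self]
    have hbne : b k ≠ 0 := b.orthonormal.ne_zero k
    rcases smul_eq_zero.mp h3 with h | h
    · linarith
    · exact absurd h hbne
  -- the diagonal matrix
  set D : Matrix (Fin d) (Fin d) ℂ :=
    Matrix.diagonal (fun k => ((μ k).2 : ℂ) + ((μ k).1 : ℂ) * Complex.I) with hDdef
  refine ⟨O, D, hOmem, Matrix.isDiag_diagonal _, ?_, ?_⟩
  · intro k
    have h1 := hnorm k
    have habs : ‖((μ k).2 : ℂ) + ((μ k).1 : ℂ) * Complex.I‖ = 1 := by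
      rw [Complex.norm_def, Complex.normSq_apply]
      simp only [Complex.add_re, Complex.ofReal_re, Complex.mul_re, Complex.I_re, Complex.I_im,
        Complex.ofReal_im, Complex.add_im, Complex.mul_im]
      rw [show ((μ k).2 + ((μ k).1 * 0 - 0 * 1)) * ((μ k).2 + ((μ k).1 * 0 - 0 * 1))
          + (0 + ((μ k).1 * 1 + 0 * 0)) * (0 + ((μ k).1 * 1 + 0 * 0))
          = (μ k).2 ^ 2 + (μ k).1 ^ 2 by ring, h1, Real.sqrt_one]
    simpa [hDdef, Matrix.diagonal_apply_eq] using habs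
  · -- main identity
    set Oc : Matrix (Fin d) (Fin d) ℂ := O.map Complex.ofReal with hOcdef
    have hcompA : A * O = O * Matrix.diagonal (fun k => (μ k).2) := by
      ext i k
      have h : (A' (b k)) i = (((μ k).2 • b k : EuclideanSpace ℝ (Fin d))) i := by rw [hAe k]
      have hL : (A' (b k)) i = ∑ j, A i j * b k j := by
        simp [hA'def, Matrix.toEuclideanLin_apply, Matrix.mulVec, dotProduct]
      have hR : (((μ k).2 • b k : EuclideanSpace ℝ (Fin d))) i = (μ k).2 * b k i := rfl
      rw [hL, hR] at h
      rw [Matrix.mul_diagonal]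
      simp only [Matrix.mul_apply, hOdef, Matrix.of_apply]
      rw [h]; ring
    have hcompB : B * O = O * Matrix.diagonal (fun k => (μ k).1) := by
      ext i k
      have h : (B' (b k)) i = (((μ k).1 • b k : EuclideanSpace ℝ (Fin d))) i := by rw [hBe k]
      have hL : (B' (b k)) i = ∑ j, B i j * b k j := by
        simp [hB'def, Matrix.toEuclideanLin_apply, Matrix.mulVec, dotProduct]
      have hR : (((μ k).1 • b k : EuclideanSpace ℝ (Fin d))) i = (μ k).1 * b k i := rfl
      rw [hL, hR] at h
      rw [Matrix.mul_diagonal]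
      simp only [Matrix.mul_apply, hOdef, Matrix.of_apply]
      rw [h]; ring
    have hMOc : M * Oc = Oc * D := by
      ext i k
      have hA1 : ∑ j, A i j * O j k = (μ k).2 * O i k := by
        have h : (A * O) i k = (O * Matrix.diagonal (fun k => (μ k).2)) i k := by rw [hcompA]
        rw [Matrix.mul_diagonal] at h
        simpa [Matrix.mul_apply, mul_comm] using h
      have hB1 : ∑ j, B i j * O j k = (μ k).1 * O i k := by
        have h : (B * O) i k = (O * Matrix.diagonal (fun k => (μ k).1)) i k := by rw [hcompB]
        rw [Matrix.mul_diagonal] at h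
        simpa [Matrix.mul_apply, mul_comm] using h
      have hexp : (M * Oc) i k = ((∑ j, A i j * O j k : ℝ) : ℂ)
          + ((∑ j, B i j * O j k : ℝ) : ℂ) * Complex.I := by
        simp only [Matrix.mul_apply, hOcdef, Matrix.map_apply]
        push_cast
        rw [Finset.sum_mul, ← Finset.sum_add_distrib]
        refine Finset.sum_congr rfl fun j _ => ?_
        rw [hMentry i j]
        push_cast
        ring
      rw [hexp, hA1, hB1]
      simp only [hOcdef, hDdef, Matrix.mul_diagonal, Matrix.map_apply]
      push_cast
      ring
    have hOcOcT : Oc * Ocᵀ = 1 := by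
      have h : O.map (⇑Complex.ofRealHom) * (Oᵀ).map (⇑Complex.ofRealHom) = 1 := by
        rw [← Matrix.map_mul, hOOT]
        simp
      have h2 : Oc * (Oᵀ).map Complex.ofReal = 1 := h
      rw [hOcdef, ← Matrix.transpose_map]
      exact h2
    calc M = M * (Oc * Ocᵀ) := by rw [hOcOcT, mul_one]
    _ = (M * Oc) * Ocᵀ := by rw [mul_assoc]
    _ = Oc * D * Ocᵀ := by rw [hMOc]
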